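/- If G is a group with no elements of order two, then every crossed extension 0 → M → T →∂ R →p G → 0 admits a weakly symmetric s-section, i.e. a normalized s-section (s, σ) with s(x^{-1}) = s(x)^{-1} and σ(x, x^{-1}) = 1 for all x ∈ G. -/
import Mathlib


/-- If `G` has no elements of order two, then every crossed
extension `0 → M → T →∂ R →p G → 0` admits a weakly symmetric s-section:
a normalized s-section `(s,σ)` with `s(x⁻¹) = s(x)⁻¹` and `σ(x,x⁻¹) = 1`. -/
theorem stmt9 {T R G : Type*} [Group T] [Group R] [Group G]
    [MulDistribMulAction R T] (δ : T →* R)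
    (hpeif1 : ∀ (r : R) (t : T), δ (r • t) = r * δ t * r⁻¹)
    (hpeif2 : ∀ t u : T, (δ t) • u = t * u * t⁻¹)
    (p : R →* G) (hp : Function.Surjective p)
    (hexact : ∀ r : R, p r = 1 ↔ r ∈ δ.range)
    -- G has no elements of order two
    (hG : ∀ x : G, x ^ 2 = 1 → x = 1) :
    ∃ (s : G → R) (σ : G → G → T),
      (∀ x, p (s x) = x) ∧
      (∀ x y, s x * s y = δ (σ x y) * s (x * y)) ∧
      s 1 = 1 ∧ (∀ x, σ 1 x = 1 ∧ σ x 1 = 1) ∧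
      (∀ x, s x⁻¹ = (s x)⁻¹) ∧ (∀ x, σ x x⁻¹ = 1) := by
  classical
  -- setoid identifying x with x⁻¹
  let sd : Setoid G := ⟨fun a b => b = a ∨ b = a⁻¹, by
    refine ⟨fun a => Or.inl rfl, ?_, ?_⟩
    · intro a b h; rcases h with h | h
      · exact Or.inl h.symm
      · exact Or.inr (inv_eq_iff_eq_inv.mp h.symm)
    · intro a b c hab hbc
      rcases hab with h | h <;> rcases hbc with h' | h' <;> simp_all⟩
  let rep : G → G := fun x => (Quotient.mk sd x).out
  have hrep : ∀ x, rep x = x ∨ rep x = x⁻¹ := by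
    intro x
    have h : sd.r (rep x) x := Quotient.mk_out (s := sd) x
    rcases h with h | h
    · exact Or.inl h.symm
    · exact Or.inr (inv_eq_iff_eq_inv.mp h.symm)
  have hrep_inv : ∀ x : G, rep x⁻¹ = rep x := by
    intro x
    have : (Quotient.mk sd x⁻¹) = Quotient.mk sd x :=
      Quotient.sound (Or.inr (inv_inv x).symm)
    simp only [rep, this]
  -- base section
  let s₀ : G → R := fun x => if x = 1 then 1 else Function.surjInv hp x
  have hs₀ : ∀ x, p (s₀ x) = x := by
    intro x
    by_cases hx : x = 1
    · simp [s₀, hx]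
    · simp [s₀, hx, Function.surjInv_eq hp]
  -- symmetric section
  let s : G → R := fun x => if rep x = x then s₀ x else (s₀ x⁻¹)⁻¹
  have hs : ∀ x, p (s x) = x := by
    intro x
    by_cases h : rep x = x
    · simp [s, h, hs₀]
    · simp [s, h, hs₀]
  have hrep1 : rep (1 : G) = 1 := by
    rcases hrep 1 with h | h
    · exact h
    · simpa using h
  have hs1 : s 1 = 1 := by simp [s, hrep1, s₀]
  have hsinv : ∀ x, s x⁻¹ = (s x)⁻¹ := by
    intro x
    by_cases hx1 : x = 1
    · simp [hx1, hs1]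
    have hne : x⁻¹ ≠ x := by
      intro h
      refine hx1 (hG x ?_)
      rw [pow_two]
      nth_rewrite 2 [← h]
      exact mul_inv_cancel x
    rcases hrep x with h | h
    · have h' : rep x⁻¹ = x := by rw [hrep_inv]; exact h
      have h'' : ¬ rep x⁻¹ = x⁻¹ := by rw [h']; exact fun e => hne e.symm
      show (if rep x⁻¹ = x⁻¹ then s₀ x⁻¹ else (s₀ x⁻¹⁻¹)⁻¹) = (if rep x = x then s₀ x else (s₀ x⁻¹)⁻¹)⁻¹
      rw [if_neg h'', if_pos h, inv_inv]
    · have hne' : ¬ rep x = x := by rw [h]; exact hne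
      have h' : rep x⁻¹ = x⁻¹ := by rw [hrep_inv]; exact h
      simp [s, hne', h']
  -- the cocycle
  have hmem : ∀ x y : G, s x * s y * (s (x * y))⁻¹ ∈ δ.range := by
    intro x y
    exact (hexact _).mp (by simp [map_mul, map_inv, hs, mul_assoc])
  let σ : G → G → T := fun x y =>
    if x = 1 ∨ y = 1 ∨ y = x⁻¹ then 1 else (hmem x y).choose
  have hσ : ∀ x y, δ (σ x y) = s x * s y * (s (x * y))⁻¹ := by
    intro x y
    by_cases h : x = 1 ∨ y = 1 ∨ y = x⁻¹
    · have : σ x y = 1 := by simp [σ, h]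
      rw [this, map_one]
      rcases h with h | h | h
      · subst h; simp [hs1]
      · subst h; simp [hs1]
      · subst h; simp [hs1, hsinv]
    · have : σ x y = (hmem x y).choose := by simp [σ, h]
      rw [this, (hmem x y).choose_spec]
  refine ⟨s, σ, hs, ?_, hs1, ?_, hsinv, ?_⟩
  · intro x y
    rw [hσ x y]
    group
  · intro x
    constructor <;> simp [σ]
  · intro x
    simp [σ]
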